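/- Let δ > 0 be sufficiently small (e.g. δ ≤ e^{-3/2}) and let F₁ be as above. Then F₁ is convex on ℝ, F₁(s) ≥ 0 for all s, and F₁'(s)·s ≥ 0 for all s ∈ ℝ. -/

import Mathlib

open Real Set Filter Topology

lemma aux_cont : Continuous (fun s : ℝ => -s * (Real.log (s^2) + 1)) := by
  have h : (fun s : ℝ => -s * (Real.log (s^2) + 1)) = fun s => -(2*(s*Real.log s)) - s := by
    funext s; rw [Real.log_pow]; push_cast; ring
  rw [h]
  exact ((continuous_const.mul Real.continuous_mul_log).neg).sub continuous_id

lemma aux_g_hasDerivAt {x : ℝ} (hx : x ≠ 0) :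
    HasDerivAt (fun s : ℝ => -s * (Real.log (s^2) + 1)) (-(Real.log (x^2) + 3)) x := by
  have h1 : HasDerivAt (fun s : ℝ => s^2) (2*x) x := by simpa using hasDerivAt_pow 2 x
  have hlog : HasDerivAt (fun s : ℝ => Real.log (s^2)) (2/x) x := by
    have := h1.log (pow_ne_zero 2 hx)
    convert this using 1
    field_simp
  have := ((hasDerivAt_id x).neg).mul (hlog.add_const 1)
  refine this.congr_deriv ?_
  simp only [Pi.neg_apply, id_eq]
  field_simp
  ring

lemma aux_inner_hasDerivAt {x : ℝ} (hx : x ≠ 0) :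
    HasDerivAt (fun s : ℝ => -(1/2) * s^2 * Real.log (s^2)) (-x * (Real.log (x^2) + 1)) x := by
  have h1 : HasDerivAt (fun s : ℝ => s^2) (2*x) x := by simpa using hasDerivAt_pow 2 x
  have hlog : HasDerivAt (fun s : ℝ => Real.log (s^2)) (2/x) x := by
    have := h1.log (pow_ne_zero 2 hx)
    convert this using 1
    field_simp
  have heq : (fun s : ℝ => -(1/2) * s^2 * Real.log (s^2))
      = fun s => (-(1/2) : ℝ) * (s^2 * Real.log (s^2)) := by funext s; ring
  rw [heq]
  have := (h1.mul hlog).const_mul (-(1/2) : ℝ)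
  refine this.congr_deriv ?_
  field_simp

lemma aux_inner_hasDerivAt_zero :
    HasDerivAt (fun s : ℝ => -(1/2) * s^2 * Real.log (s^2)) 0 0 := by
  rw [hasDerivAt_iff_tendsto_slope]
  have h : Tendsto (fun s : ℝ => -(s * Real.log s)) (𝓝[≠] 0) (𝓝 0) := by
    have h0 := (Real.continuous_mul_log.neg).tendsto 0
    simp only [Pi.neg_apply, Real.log_zero, mul_zero, neg_zero] at h0
    exact h0.mono_left nhdsWithin_le_nhds
  refine Filter.Tendsto.congr' ?_ h
  filter_upwards [self_mem_nhdsWithin] with s hs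
  have hs : s ≠ 0 := hs
  simp only [slope, vsub_eq_sub, sub_zero, smul_eq_mul]
  rw [Real.log_pow]
  push_cast
  field_simp
  ring

/-- The derivative of the truncation. -/
noncomputable def auxG (δ : ℝ) : ℝ → ℝ := fun s =>
  if |s| < δ then -s * (Real.log (s^2) + 1)
  else -s * (Real.log (δ^2) + 3) + (if 0 < s then 2*δ else -(2*δ))

lemma auxG_eq_inner {δ : ℝ} (hδ : 0 < δ) {s : ℝ} (h : |s| ≤ δ) :
    auxG δ s = -s * (Real.log (s^2) + 1) := by
  rcases lt_or_eq_of_le h with h' | h'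
  · simp [auxG, h']
  · rcases (abs_eq hδ.le).mp h' with rfl | rfl
    · rw [auxG, if_neg (by simp [abs_of_pos hδ]), if_pos hδ]
      ring
    · rw [auxG, if_neg (by simp [abs_of_pos hδ]), if_neg (by linarith)]
      rw [neg_sq]
      ring

lemma auxlog {δ : ℝ} (hδ : 0 < δ) (hδ' : δ ≤ Real.exp (-(3/2))) {s : ℝ} (hs : s ≠ 0)
    (h : |s| ≤ δ) : Real.log (s^2) + 3 ≤ 0 := by
  have h1 : Real.log |s| ≤ Real.log δ := Real.log_le_log (abs_pos.mpr hs) h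
  have h2 : Real.log δ ≤ -(3/2) := by
    have := Real.log_le_log hδ hδ'
    rwa [Real.log_exp] at this
  have h3 : Real.log (s^2) = 2 * Real.log |s| := by
    rw [Real.log_pow, Real.log_abs]; push_cast; ring
  linarith

lemma auxG_mono {δ : ℝ} (hδ : 0 < δ) (hδ' : δ ≤ Real.exp (-(3/2))) : Monotone (auxG δ) := by
  have hLδ : Real.log (δ^2) + 3 ≤ 0 := auxlog hδ hδ' hδ.ne' (by rw [abs_of_pos hδ])
  -- monotone on [0, δ] and [-δ, 0] for the inner function
  have hinner : ∀ a b : ℝ, |a| ≤ δ → |b| ≤ δ → ((0 ≤ a ∧ 0 ≤ b) ∨ (a ≤ 0 ∧ b ≤ 0)) → a ≤ b →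
      auxG δ a ≤ auxG δ b := by
    intro a b ha hb hsgn hab
    rw [auxG_eq_inner hδ ha, auxG_eq_inner hδ hb]
    have habs : ∀ x : ℝ, |x| ≤ δ → x ∈ Icc (-δ) δ := fun x hx => abs_le.mp hx
    rcases hsgn with ⟨ha0, hb0⟩ | ⟨ha0, hb0⟩
    · have hmono : MonotoneOn (fun s : ℝ => -s * (Real.log (s^2) + 1)) (Icc 0 δ) := by
        apply monotoneOn_of_deriv_nonneg (convex_Icc _ _) aux_cont.continuousOn
        · rw [interior_Icc]
          intro x hx
          exact (aux_g_hasDerivAt (ne_of_gt hx.1)).differentiableAt.differentiableWithinAt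
        · rw [interior_Icc]
          intro x hx
          rw [(aux_g_hasDerivAt (ne_of_gt hx.1)).deriv]
          have := auxlog hδ hδ' (ne_of_gt hx.1) (by rw [abs_of_pos hx.1]; exact hx.2.le)
          linarith
      exact hmono ⟨ha0, (habs a ha).2⟩ ⟨hb0, (habs b hb).2⟩ hab
    · have hmono : MonotoneOn (fun s : ℝ => -s * (Real.log (s^2) + 1)) (Icc (-δ) 0) := by
        apply monotoneOn_of_deriv_nonneg (convex_Icc _ _) aux_cont.continuousOn
        · rw [interior_Icc]
          intro x hx
          exact (aux_g_hasDerivAt (ne_of_lt hx.2)).differentiableAt.differentiableWithinAt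
        · rw [interior_Icc]
          intro x hx
          rw [(aux_g_hasDerivAt (ne_of_lt hx.2)).deriv]
          have := auxlog hδ hδ' (ne_of_lt hx.2)
            (by rw [abs_of_neg hx.2]; linarith [hx.1])
          linarith
      exact hmono ⟨(habs a ha).1, ha0⟩ ⟨(habs b hb).1, hb0⟩ hab
  have houterR : ∀ a b : ℝ, δ ≤ a → a ≤ b → auxG δ a ≤ auxG δ b := by
    intro a b ha hab
    have ha' : ¬ |a| < δ := by rw [abs_of_pos (by linarith)]; linarith
    have hb' : ¬ |b| < δ := by rw [abs_of_pos (by linarith)]; linarith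
    rw [auxG, if_neg ha', if_pos (by linarith), auxG, if_neg hb', if_pos (by linarith)]
    nlinarith
  have houterL : ∀ a b : ℝ, b ≤ -δ → a ≤ b → auxG δ a ≤ auxG δ b := by
    intro a b hb hab
    have ha' : ¬ |a| < δ := by rw [abs_of_neg (by linarith)]; linarith
    have hb' : ¬ |b| < δ := by rw [abs_of_neg (by linarith)]; linarith
    rw [auxG, if_neg ha', if_neg (by linarith), auxG, if_neg hb', if_neg (by linarith)]
    nlinarith
  -- monotone on [0, ∞)
  have hposMono : ∀ a b : ℝ, 0 ≤ a → a ≤ b → auxG δ a ≤ auxG δ b := by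
    intro a b ha hab
    rcases le_or_gt b δ with hbδ | hbδ
    · exact hinner a b (by rw [abs_of_nonneg ha]; linarith) (by rw [abs_of_nonneg (by linarith)]; exact hbδ)
        (Or.inl ⟨ha, by linarith⟩) hab
    · rcases le_or_gt a δ with haδ | haδ
      · calc auxG δ a ≤ auxG δ δ := hinner a δ (by rw [abs_of_nonneg ha]; exact haδ)
              (by rw [abs_of_pos hδ]) (Or.inl ⟨ha, hδ.le⟩) haδ
          _ ≤ auxG δ b := houterR δ b le_rfl hbδ.le
      · exact houterR a b haδ.le hab
  have hnegMono : ∀ a b : ℝ, b ≤ 0 → a ≤ b → auxG δ a ≤ auxG δ b := by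
    intro a b hb hab
    rcases le_or_gt (-δ) a with haδ | haδ
    · exact hinner a b (by rw [abs_of_nonpos (by linarith)]; linarith)
        (by rw [abs_of_nonpos hb]; linarith) (Or.inr ⟨by linarith, hb⟩) hab
    · rcases le_or_gt (-δ) b with hbδ | hbδ
      · calc auxG δ a ≤ auxG δ (-δ) := houterL a (-δ) le_rfl haδ.le
          _ ≤ auxG δ b := hinner (-δ) b (by rw [abs_neg, abs_of_pos hδ])
              (by rw [abs_of_nonpos hb]; linarith) (Or.inr ⟨by linarith, hb⟩) (by linarith)
      · exact houterL a b hbδ.le hab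
  intro a b hab
  rcases le_or_gt 0 a with ha | ha
  · exact hposMono a b ha hab
  · rcases le_or_gt b 0 with hb | hb
    · exact hnegMono a b hb hab
    · calc auxG δ a ≤ auxG δ 0 := hnegMono a 0 le_rfl ha.le
        _ ≤ auxG δ b := hposMono 0 b le_rfl hb.le

lemma auxF_hasDerivAt (δ : ℝ) (hδ : 0 < δ) (F : ℝ → ℝ)
    (h0 : F 0 = 0)
    (h1 : ∀ s : ℝ, s ≠ 0 → |s| < δ → F s = -(1 / 2) * s ^ 2 * Real.log (s ^ 2))
    (h2 : ∀ s : ℝ, δ ≤ |s| →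
      F s = -(1 / 2) * s ^ 2 * (Real.log (δ ^ 2) + 3) + 2 * δ * |s| - δ ^ 2 / 2) :
    ∀ s : ℝ, HasDerivAt F (auxG δ s) s := by
  have hFinner : ∀ x : ℝ, |x| < δ → F x = -(1/2)*x^2*Real.log (x^2) := by
    intro x hx
    rcases eq_or_ne x 0 with rfl | hx0
    · simp [h0]
    · exact h1 x hx0 hx
  have hFR : ∀ x : ℝ, δ ≤ x → F x = -(1/2)*(Real.log (δ^2)+3)*x^2 + 2*δ*x - δ^2/2 := by
    intro x hx
    have hx' : δ ≤ |x| := by rw [abs_of_pos (by linarith)]; exact hx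
    rw [h2 x hx', abs_of_pos (by linarith)]; ring
  have hFL : ∀ x : ℝ, x ≤ -δ → F x = -(1/2)*(Real.log (δ^2)+3)*x^2 - 2*δ*x - δ^2/2 := by
    intro x hx
    have hx' : δ ≤ |x| := by rw [abs_of_neg (by linarith)]; linarith
    rw [h2 x hx', abs_of_neg (by linarith)]; ring
  have hquadR : ∀ x : ℝ, HasDerivAt (fun y : ℝ => -(1/2)*(Real.log (δ^2)+3)*y^2 + 2*δ*y - δ^2/2)
      (-(Real.log (δ^2)+3)*x + 2*δ) x := by
    intro x
    have hp : HasDerivAt (fun y : ℝ => y^2) (2*x) x := by simpa using hasDerivAt_pow 2 x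
    have hid : HasDerivAt (fun y : ℝ => y) 1 x := hasDerivAt_id x
    have h := ((hp.const_mul (-(1/2)*(Real.log (δ^2)+3))).add
      (hid.const_mul (2*δ))).sub_const (δ^2/2)
    refine h.congr_deriv ?_
    ring
  have hquadL : ∀ x : ℝ, HasDerivAt (fun y : ℝ => -(1/2)*(Real.log (δ^2)+3)*y^2 - 2*δ*y - δ^2/2)
      (-(Real.log (δ^2)+3)*x - 2*δ) x := by
    intro x
    have hp : HasDerivAt (fun y : ℝ => y^2) (2*x) x := by simpa using hasDerivAt_pow 2 x
    have hid : HasDerivAt (fun y : ℝ => y) 1 x := hasDerivAt_id x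
    have h := ((hp.const_mul (-(1/2)*(Real.log (δ^2)+3))).sub
      (hid.const_mul (2*δ))).sub_const (δ^2/2)
    refine h.congr_deriv ?_
    ring
  intro s
  rcases lt_trichotomy |s| δ with hlt | heq | hgt
  · -- |s| < δ
    have hev : F =ᶠ[𝓝 s] (fun x => -(1/2)*x^2*Real.log (x^2)) := by
      have hopen : IsOpen {x : ℝ | |x| < δ} := isOpen_Iio.preimage continuous_abs
      filter_upwards [hopen.mem_nhds hlt] with x hx using hFinner x hx
    rcases eq_or_ne s 0 with rfl | hs0
    · have h := aux_inner_hasDerivAt_zero.congr_of_eventuallyEq hev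
      refine h.congr_deriv ?_
      simp [auxG, hδ]
    · have h := (aux_inner_hasDerivAt hs0).congr_of_eventuallyEq hev
      refine h.congr_deriv ?_
      rw [auxG, if_pos hlt]
  · -- |s| = δ
    rcases (abs_eq hδ.le).mp heq with hs | hs
    · -- s = δ
      rw [hs]
      have hR : HasDerivWithinAt F (-(Real.log (δ^2)+3)*δ + 2*δ) (Ici δ) δ :=
        ((hquadR δ).hasDerivWithinAt).congr (fun x hx => hFR x hx) (hFR δ le_rfl)
      have hL : HasDerivWithinAt F (-(Real.log (δ^2)+3)*δ + 2*δ) (Iic δ) δ := by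
        rw [← hasDerivWithinAt_inter (Ioi_mem_nhds hδ)]
        have key : HasDerivWithinAt F (-δ*(Real.log (δ^2)+1)) (Iic δ ∩ Ioi 0) δ := by
          refine HasDerivWithinAt.congr ((aux_inner_hasDerivAt hδ.ne').hasDerivWithinAt)
            (fun x hx => ?_) ?_
          · obtain ⟨hx1, hx2⟩ := hx
            have hx1' : x ≤ δ := hx1
            have hx2' : (0:ℝ) < x := hx2
            rcases lt_or_eq_of_le hx1' with h' | h'
            · exact hFinner x (by rw [abs_of_pos hx2']; exact h')
            · rw [h', hFR δ le_rfl]; ring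
          · rw [hFR δ le_rfl]; ring
        refine key.congr_deriv ?_
        ring
      have h := hL.union hR
      rw [Iic_union_Ici] at h
      have h' := hasDerivWithinAt_univ.mp h
      refine h'.congr_deriv ?_
      rw [auxG, if_neg (by simp [abs_of_pos hδ]), if_pos hδ]
      ring
    · -- s = -δ
      rw [hs]
      have hδ0 : -δ < 0 := by linarith
      have hL : HasDerivWithinAt F (-(Real.log (δ^2)+3)*(-δ) - 2*δ) (Iic (-δ)) (-δ) :=
        ((hquadL (-δ)).hasDerivWithinAt).congr (fun x hx => hFL x hx) (hFL (-δ) le_rfl)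
      have hR : HasDerivWithinAt F (-(Real.log (δ^2)+3)*(-δ) - 2*δ) (Ici (-δ)) (-δ) := by
        rw [← hasDerivWithinAt_inter (Iio_mem_nhds hδ0)]
        have key : HasDerivWithinAt F (-(-δ)*(Real.log ((-δ)^2)+1)) (Ici (-δ) ∩ Iio 0) (-δ) := by
          refine ((aux_inner_hasDerivAt (ne_of_lt hδ0)).hasDerivWithinAt).congr ?_ ?_
          · intro x hx
            obtain ⟨hx1, hx2⟩ := hx
            have hx1' : -δ ≤ x := hx1
            have hx2' : x < 0 := hx2
            rcases lt_or_eq_of_le hx1' with h' | h'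
            · exact hFinner x (by rw [abs_of_neg hx2']; linarith)
            · rw [← h', hFL (-δ) le_rfl, neg_sq]; ring
          · rw [hFL (-δ) le_rfl, neg_sq]; ring
        refine key.congr_deriv ?_
        rw [neg_sq]
        ring
      have h := hL.union hR
      rw [Iic_union_Ici] at h
      have h' := hasDerivWithinAt_univ.mp h
      refine h'.congr_deriv ?_
      rw [auxG, if_neg (by rw [abs_neg, abs_of_pos hδ]; exact lt_irrefl δ),
        if_neg (by intro hc; linarith)]
      ring
  · -- δ < |s|
    rcases lt_abs.mp hgt with hs | hs
    · have hev : F =ᶠ[𝓝 s] (fun y : ℝ => -(1/2)*(Real.log (δ^2)+3)*y^2 + 2*δ*y - δ^2/2) := by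
        filter_upwards [Ioi_mem_nhds hs] with x hx using hFR x (le_of_lt hx)
      have h := (hquadR s).congr_of_eventuallyEq hev
      refine h.congr_deriv ?_
      rw [auxG, if_neg (not_lt.mpr hgt.le), if_pos (by linarith)]
      ring
    · have hs' : s < -δ := by linarith
      have hev : F =ᶠ[𝓝 s] (fun y : ℝ => -(1/2)*(Real.log (δ^2)+3)*y^2 - 2*δ*y - δ^2/2) := by
        filter_upwards [Iio_mem_nhds hs'] with x hx using hFL x (le_of_lt hx)
      have h := (hquadL s).congr_of_eventuallyEq hev
      refine h.congr_deriv ?_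
      rw [auxG, if_neg (not_lt.mpr hgt.le), if_neg (by intro hc; linarith)]
      ring

/-- For `δ > 0` sufficiently small (`δ ≤ e^{-3/2}`), the truncation `F₁` is
convex, nonnegative, and satisfies `F₁'(s)·s ≥ 0` for all `s`. -/
theorem stmt_8 (δ : ℝ) (hδ : 0 < δ) (hδ' : δ ≤ Real.exp (-(3 / 2))) (F : ℝ → ℝ)
    (h0 : F 0 = 0)
    (h1 : ∀ s : ℝ, s ≠ 0 → |s| < δ → F s = -(1 / 2) * s ^ 2 * Real.log (s ^ 2))
    (h2 : ∀ s : ℝ, δ ≤ |s| →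
      F s = -(1 / 2) * s ^ 2 * (Real.log (δ ^ 2) + 3) + 2 * δ * |s| - δ ^ 2 / 2) :
    ConvexOn ℝ Set.univ F ∧ (∀ s : ℝ, 0 ≤ F s) ∧ ∀ s : ℝ, 0 ≤ deriv F s * s := by
  have hG := auxF_hasDerivAt δ hδ F h0 h1 h2
  have hderiv : deriv F = auxG δ := funext fun s => (hG s).deriv
  have hdiff : Differentiable ℝ F := fun s => (hG s).differentiableAt
  have hLδ : Real.log (δ^2) + 3 ≤ 0 := auxlog hδ hδ' hδ.ne' (by rw [abs_of_pos hδ])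
  refine ⟨?_, ?_, ?_⟩
  · exact Monotone.convexOn_univ_of_deriv hdiff (hderiv ▸ auxG_mono hδ hδ')
  · intro s
    rcases le_or_gt δ |s| with h | h
    · rw [h2 s h]
      have h2δ : 2*δ*|s| ≥ 2*δ*δ := by nlinarith
      nlinarith [sq_nonneg s, mul_nonneg (sq_nonneg s) (neg_nonneg.mpr hLδ)]
    · rcases eq_or_ne s 0 with rfl | hs0
      · rw [h0]
      · rw [h1 s hs0 h]
        have := auxlog hδ hδ' hs0 h.le
        nlinarith [sq_nonneg s]
  · intro s
    rw [hderiv]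
    rcases le_or_gt δ |s| with h | h
    · rw [auxG, if_neg (not_lt.mpr h)]
      by_cases hs : 0 < s
      · rw [if_pos hs]
        nlinarith [sq_nonneg s, mul_nonneg (sq_nonneg s) (neg_nonneg.mpr hLδ)]
      · rw [if_neg hs]
        push_neg at hs
        nlinarith [sq_nonneg s, mul_nonneg (sq_nonneg s) (neg_nonneg.mpr hLδ),
          mul_nonneg hδ.le (neg_nonneg.mpr hs)]
    · rw [auxG, if_pos h]
      rcases eq_or_ne s 0 with rfl | hs0
      · simp
      · have := auxlog hδ hδ' hs0 h.le
        nlinarith [sq_nonneg s]
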